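/- Let X and H be real Hilbert spaces with a continuous linear embedding ι : X → H, let X_N ⊆ X be a linear subspace, and let F : X → X* be strongly monotone with constant ν > 0. Let u ∈ X_N and ψ ∈ X_N be such that (ιψ, ιv)_H = ⟨F(u), v⟩ for all v ∈ X_N (ψ is the discrete Riesz representative of F(u) with respect to the H-inner product). Suppose ũ ∈ X satisfies the nonlinear elliptic reconstruction equation ⟨F(ũ), v⟩ = (ιψ, ιv)_H for all v ∈ X, and suppose η ≥ 0 satisfies (ιψ, ιw)_H − ⟨F(u), w⟩ ≤ η for all w ∈ X with ‖w‖_X = 1. Then ‖ũ − u‖_X ≤ η/ν. -/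

import Mathlib

/-- Bound on the distance between a discrete iterate and its nonlinear
elliptic reconstruction. -/
theorem nonlinear_reconstruction_estimate
    {X : Type*} [NormedAddCommGroup X] [InnerProductSpace ℝ X] [CompleteSpace X]
    {H : Type*} [NormedAddCommGroup H] [InnerProductSpace ℝ H] [CompleteSpace H]
    (ι : X →L[ℝ] H) (hι : Function.Injective ι)
    (XN : Submodule ℝ X)
    (F : X → X →L[ℝ] ℝ) (ν : ℝ) (hν : 0 < ν)
    (hmono : ∀ u v : X, ν * ‖u - v‖ ^ 2 ≤ F u (u - v) - F v (u - v))
    (u ψ : X) (hu : u ∈ XN) (hψ : ψ ∈ XN)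
    (hriesz : ∀ v ∈ XN, (inner ℝ (ι ψ) (ι v) : ℝ) = F u v)
    (utilde : X)
    (hrec : ∀ v : X, F utilde v = (inner ℝ (ι ψ) (ι v) : ℝ))
    (η : ℝ) (hη0 : 0 ≤ η)
    (hres : ∀ w : X, ‖w‖ = 1 → (inner ℝ (ι ψ) (ι w) : ℝ) - F u w ≤ η) :
    ‖utilde - u‖ ≤ η / ν := by
  set d := utilde - u with hd
  by_cases h0 : d = 0
  · rw [h0, norm_zero]
    positivity
  · have hdpos : 0 < ‖d‖ := norm_pos_iff.mpr h0
    set w := ‖d‖⁻¹ • d with hw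
    have hwnorm : ‖w‖ = 1 := by
      rw [hw, norm_smul, norm_inv, norm_norm, inv_mul_cancel₀ hdpos.ne']
    have hres' := hres w hwnorm
    have hlin : (inner ℝ (ι ψ) (ι w) : ℝ) - F u w
        = ‖d‖⁻¹ * ((inner ℝ (ι ψ) (ι d) : ℝ) - F u d) := by
      rw [hw, map_smul, inner_smul_right, map_smul]
      simp [smul_eq_mul]; ring
    have key : ν * ‖d‖ ^ 2 ≤ ((inner ℝ (ι ψ) (ι d) : ℝ) - F u d) := by
      have := hmono utilde u
      rw [← hd, hrec d] at this
      linarith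
    have hη' : (inner ℝ (ι ψ) (ι d) : ℝ) - F u d ≤ η * ‖d‖ := by
      have h1 : ‖d‖⁻¹ * ((inner ℝ (ι ψ) (ι d) : ℝ) - F u d) ≤ η := by
        rw [← hlin]; exact hres'
      have := mul_le_mul_of_nonneg_left h1 hdpos.le
      rw [← mul_assoc, mul_inv_cancel₀ hdpos.ne', one_mul] at this
      linarith [this]
    have : ν * ‖d‖ ≤ η := by
      have h2 : ν * ‖d‖ * ‖d‖ ≤ η * ‖d‖ := by
        have : ν * ‖d‖ ^ 2 ≤ η * ‖d‖ := le_trans key hη'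
        nlinarith
      exact le_of_mul_le_mul_right h2 hdpos
    rw [le_div_iff₀ hν]
    linarith [this]
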